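/- arXiv:2211.08511 — 2 statements merged into one kernel-verified Lean document; each statement's English description precedes it below -/
import Mathlib

section
/- Let q ≥ 5 be a prime power and let x ∈ F_q be maximally hyperbolic (T² - 3xT + 1 has a root λ generating F_q*). Let (y,z) ≠ (0,0) in F_q² with x² + y² + z² = 3xyz. If L_xᵐ fixes the column vector (y, z), where L_x = [[3x,-1],[1,0]], then (q-1) divides m. -/
/-- If `x` is maximally hyperbolic and `L_xᵐ` fixes a nonzero vector `(y,z)` on the
Markoff fiber, then `q - 1` divides `m`. -/
theorem stmt_10 (F : Type*) [Field F] [Fintype F] (hq : 5 ≤ Fintype.card F)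
    (x : F)
    (hmax : ∃ u : Fˣ, (u : F) ^ 2 - 3 * x * (u : F) + 1 = 0 ∧
      ∀ v : Fˣ, v ∈ Subgroup.zpowers u)
    (y z : F) (hyz : (y, z) ≠ (0, 0))
    (hM : x ^ 2 + y ^ 2 + z ^ 2 = 3 * x * y * z)
    (m : ℕ)
    (hfix : ((!![3 * x, -1; 1, 0] : Matrix (Fin 2) (Fin 2) F) ^ m).mulVec ![y, z]
      = ![y, z]) :
    (Fintype.card F - 1) ∣ m := by
  classical
  obtain ⟨u, hu, hgen⟩ := hmax
  have hord : orderOf u = Fintype.card F - 1 := by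
    rw [orderOf_eq_card_of_forall_mem_zpowers hgen]
    rw [Nat.card_eq_fintype_card, Fintype.card_units]
  set l : F := (u : F) with hldef
  set μ : F := 3 * x - l with hμdef
  have hlμ : l * μ = 1 := by rw [hμdef]; linear_combination -hu
  have hμeq : μ ^ 2 - 3 * x * μ + 1 = 0 := by rw [hμdef]; linear_combination hu
  have hne : l ≠ μ := by
    intro h
    have hl2 : l ^ 2 = 1 := by rw [pow_two]; nth_rewrite 2 [h]; exact hlμ
    have hu2 : u ^ 2 = 1 := Units.ext (by push_cast; exact hl2)
    have hdvd : Fintype.card F - 1 ∣ 2 := hord ▸ orderOf_dvd_of_pow_eq_one hu2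
    have := Nat.le_of_dvd (by norm_num) hdvd
    omega
  have hd : l - μ ≠ 0 := sub_ne_zero.mpr hne
  obtain ⟨a, b, hy, hz⟩ : ∃ a b : F, a * l + b * μ = y ∧ a + b = z :=
    ⟨(y - μ * z) / (l - μ), (l * z - y) / (l - μ), by field_simp; ring, by field_simp; ring⟩
  set L : Matrix (Fin 2) (Fin 2) F := !![3 * x, -1; 1, 0] with hLdef
  have key : ∀ n : ℕ, (L ^ n).mulVec ![y, z] =
      ![a * l ^ (n + 1) + b * μ ^ (n + 1), a * l ^ n + b * μ ^ n] := by
    intro n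
    induction n with
    | zero =>
        funext i
        fin_cases i <;>
          simp [Matrix.one_mulVec, pow_one, ← hy, ← hz]
    | succ n ih =>
        rw [pow_succ', ← Matrix.mulVec_mulVec, ih]
        funext i
        fin_cases i
        · simp [hLdef, Matrix.mulVec, dotProduct, Fin.sum_univ_two]
          linear_combination -(a * l ^ n) * hu - (b * μ ^ n) * hμeq
        · simp [hLdef, Matrix.mulVec, dotProduct, Fin.sum_univ_two]
  rw [key m] at hfix
  have h0 := congrFun hfix 0
  have h1 := congrFun hfix 1
  simp only [Matrix.cons_val_zero, Matrix.cons_val_one, Matrix.head_cons] at h0 h1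
  have hlm1 : l ^ m = 1 := by
    by_contra hlm
    have hprod : l ^ m * μ ^ m = 1 := by rw [← mul_pow, hlμ, one_pow]
    have hμm : μ ^ m ≠ 1 := by
      intro h
      exact hlm (by rw [← hprod, h, mul_one])
    have ha : a = 0 := by
      have h3 : a * (l ^ m - 1) * (l - μ) = 0 := by
        linear_combination h0 - hy - μ * (h1 - hz)
      rcases mul_eq_zero.mp h3 with h4 | h4
      · rcases mul_eq_zero.mp h4 with h5 | h5
        · exact h5
        · exact absurd (by linear_combination h5) hlm
      · exact absurd h4 hd
    have hb : b = 0 := by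
      have h3 : b * (μ ^ m - 1) = 0 := by
        linear_combination h1 - hz - (l ^ m - 1) * ha
      rcases mul_eq_zero.mp h3 with h4 | h4
      · exact h4
      · exact absurd (by linear_combination h4) hμm
    apply hyz
    have hy0 : y = 0 := by rw [← hy, ha, hb]; ring
    have hz0 : z = 0 := by rw [← hz, ha, hb]; ring
    simp [hy0, hz0]
  have hum : u ^ m = 1 := Units.ext (by push_cast; exact hlm1)
  exact hord ▸ orderOf_dvd_of_pow_eq_one hum
end

section
/- Let q ≥ 5 be a prime power and let x ∈ F_q be maximally hyperbolic with λ ∈ F_q* a generator satisfying λ² - 3xλ + 1 = 0. Let (y,z) and (y',z') be nonzero vectors in F_q² with L_xⁿ(y,z) = (y',z') for some n ≥ 0, where L_x = [[3x,-1],[1,0]]. Then at least one of the quantities y - λ⁻¹z and -y + λz is nonzero, and for such a nonzero coordinate the equation λⁿ·(y - λ⁻¹z) = y' - λ⁻¹z' (respectively λ⁻ⁿ·(-y + λz) = -y' + λz') holds, so n is determined modulo q-1 by a discrete logarithm in F_q*. -/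
lemma key_lemma (F : Type*) [Field F] (x l : F) (hl : l ≠ 0)
    (hsum : 3 * x = l + l⁻¹) (y z : F) (n : ℕ) :
    (((!![3 * x, -1; 1, 0] : Matrix (Fin 2) (Fin 2) F) ^ n).mulVec ![y, z]) 0
        - l⁻¹ * (((!![3 * x, -1; 1, 0] : Matrix (Fin 2) (Fin 2) F) ^ n).mulVec ![y, z]) 1
        = l ^ n * (y - l⁻¹ * z) ∧
    -(((!![3 * x, -1; 1, 0] : Matrix (Fin 2) (Fin 2) F) ^ n).mulVec ![y, z]) 0
        + l * (((!![3 * x, -1; 1, 0] : Matrix (Fin 2) (Fin 2) F) ^ n).mulVec ![y, z]) 1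
        = (l⁻¹) ^ n * (-y + l * z) := by
  induction n with
  | zero => simp [Matrix.mulVec, dotProduct, Fin.sum_univ_two]
  | succ n ih =>
    obtain ⟨h1, h2⟩ := ih
    rw [pow_succ', ← Matrix.mulVec_mulVec]
    set v := ((!![3 * x, -1; 1, 0] : Matrix (Fin 2) (Fin 2) F) ^ n).mulVec ![y, z] with hv
    have e0 : ((!![3 * x, -1; 1, 0] : Matrix (Fin 2) (Fin 2) F).mulVec v) 0
        = 3 * x * v 0 - v 1 := by
      simp [Matrix.mulVec, dotProduct, Fin.sum_univ_two]; ring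
    have e1 : ((!![3 * x, -1; 1, 0] : Matrix (Fin 2) (Fin 2) F).mulVec v) 1 = v 0 := by
      simp [Matrix.mulVec, dotProduct, Fin.sum_univ_two]
    rw [e0, e1]
    have hinv : l * l⁻¹ = 1 := mul_inv_cancel₀ hl
    constructor
    · rw [pow_succ]; linear_combination l * h1 + v 0 * hsum + v 1 * hinv
    · rw [pow_succ]; linear_combination l⁻¹ * h2 - v 0 * hsum - v 1 * hinv

/-- Path-finding on a maximally hyperbolic fiber reduces to a discrete logarithm:
with `U = [[1,-λ⁻¹],[-1,λ]]` diagonalizing `L_x`, at least one coordinate of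
`U(y,z)` is nonzero, the corresponding equation `λⁿ(y - λ⁻¹z) = y' - λ⁻¹z'`
(resp. `λ⁻ⁿ(-y + λz) = -y' + λz'`) holds, and `n` is determined modulo `q - 1`. -/
theorem stmt_18 (F : Type*) [Field F] [Fintype F] (hq : 5 ≤ Fintype.card F)
    (x : F) (u : Fˣ)
    (hroot : (u : F) ^ 2 - 3 * x * (u : F) + 1 = 0)
    (hgen : ∀ v : Fˣ, v ∈ Subgroup.zpowers u)
    (y z y' z' : F) (hyz : (y, z) ≠ (0, 0)) (hyz' : (y', z') ≠ (0, 0))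
    (n : ℕ)
    (hn : ((!![3 * x, -1; 1, 0] : Matrix (Fin 2) (Fin 2) F) ^ n).mulVec ![y, z]
      = ![y', z']) :
    let l : F := (u : F)
    (y - l⁻¹ * z ≠ 0 ∨ -y + l * z ≠ 0) ∧
    (y - l⁻¹ * z ≠ 0 → l ^ n * (y - l⁻¹ * z) = y' - l⁻¹ * z') ∧
    (-y + l * z ≠ 0 → (l⁻¹) ^ n * (-y + l * z) = -y' + l * z') ∧
    (∀ m : ℕ,
      ((!![3 * x, -1; 1, 0] : Matrix (Fin 2) (Fin 2) F) ^ m).mulVec ![y, z]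
          = ![y', z'] →
      n ≡ m [MOD Fintype.card F - 1]) := by
  intro l
  have hl : l ≠ 0 := u.ne_zero
  have hsum : 3 * x = l + l⁻¹ := by
    field_simp
    linear_combination -hroot
  have hord : orderOf u = Fintype.card F - 1 := by
    classical
    rw [orderOf_eq_card_of_forall_mem_zpowers hgen, Nat.card_eq_fintype_card, Fintype.card_units]
  have hl2 : l ^ 2 ≠ 1 := by
    intro h
    have : u ^ 2 = 1 := by ext; push_cast; exact h
    have h2 : orderOf u ≤ 2 := orderOf_le_of_pow_eq_one (by norm_num) this
    omega
  -- the key equations for n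
  obtain ⟨k1, k2⟩ := key_lemma F x l hl hsum y z n
  rw [hn] at k1 k2
  simp only [Matrix.cons_val_zero, Matrix.cons_val_one, Matrix.head_cons] at k1 k2
  -- nonvanishing
  have hnz : y - l⁻¹ * z ≠ 0 ∨ -y + l * z ≠ 0 := by
    by_contra h
    push_neg at h
    obtain ⟨h1, h2⟩ := h
    have hz : z = 0 := by
      by_contra hz
      apply hl2
      have : (l - l⁻¹) * z = 0 := by linear_combination h1 + h2
      rcases mul_eq_zero.mp this with h | h
      · have hll : l = l⁻¹ := sub_eq_zero.mp h
        field_simp at hll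
        linear_combination hll
      · exact absurd h hz
    have hy : y = 0 := by simpa [hz] using h2
    exact hyz (by simp [hy, hz])
  refine ⟨hnz, fun _ => k1.symm, fun _ => k2.symm, ?_⟩
  intro m hm
  obtain ⟨j1, j2⟩ := key_lemma F x l hl hsum y z m
  rw [hm] at j1 j2
  simp only [Matrix.cons_val_zero, Matrix.cons_val_one, Matrix.head_cons] at j1 j2
  rcases hnz with hc | hc
  · have : l ^ n = l ^ m := by
      have := k1.symm.trans j1
      exact mul_right_cancel₀ hc this
    have hu : u ^ n = u ^ m := by ext; push_cast; exact this
    have := (pow_eq_pow_iff_modEq).mp hu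
    rwa [hord] at this
  · have : (l⁻¹) ^ n = (l⁻¹) ^ m := by
      have := k2.symm.trans j2
      exact mul_right_cancel₀ hc this
    have hu : u⁻¹ ^ n = u⁻¹ ^ m := by
      ext
      push_cast
      simpa using this
    have := (pow_eq_pow_iff_modEq).mp hu
    rwa [orderOf_inv, hord] at this
end
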